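/- arXiv:1707.07308 — 4 statements merged into one kernel-verified Lean document; each statement's English description precedes it below -/
import Mathlib

section
/- Let q ≥ 2 be a prime power and let F be a finite field with q elements. For non-negative integers n, m, r let R_q(n,m,r) denote the number of n × m matrices over F of rank r. Then for every integer a ≥ n + m one has ∑_{r ≥ 0} R_q(n,m,r)·(q;q)_{a−r} = q^{nm} · (q;q)_{a−n}(q;q)_{a−m} / (q;q)_{a−n−m}. -/
/-- The q-Pochhammer symbol `(q;q)_t = ∏_{i=1}^{t} (1 - q^i)`. -/
def qPoch (q : ℚ) (t : ℕ) : ℚ := ∏ i ∈ Finset.range t, (1 - q ^ (i + 1))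

/-- `R_q(n,m,r)`: the number of `n × m` matrices of rank `r` over the finite field `F`. -/
noncomputable def Rcount (F : Type) [Field F] [Fintype F] (n m r : ℕ) : ℕ :=
  Nat.card {A : Matrix (Fin n) (Fin m) F // A.rank = r}

open Finset Submodule Module Matrix

lemma qPoch_succ (q : ℚ) (t : ℕ) : qPoch q (t + 1) = qPoch q t * (1 - q ^ (t + 1)) :=
  Finset.prod_range_succ _ _

lemma qPoch_ne_zero {q : ℕ} (hq : 2 ≤ q) (t : ℕ) : qPoch (q : ℚ) t ≠ 0 := by
  unfold qPoch
  apply Finset.prod_ne_zero_iff.mpr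
  intro i _
  have h2 : (2 : ℚ) ≤ (q : ℚ) := by exact_mod_cast hq
  have : (2 : ℚ) ≤ (q : ℚ) ^ (i + 1) := by
    calc (2:ℚ) ≤ (q:ℚ) := h2
    _ = (q:ℚ) ^ 1 := (pow_one _).symm
    _ ≤ (q:ℚ) ^ (i+1) := pow_le_pow_right₀ (by linarith) (by omega)
  intro h
  linarith [sub_eq_zero.mp h]

section FieldCount

variable {F : Type} [Field F] [Fintype F]

/-- Auxiliary sum over tuples of columns. -/
noncomputable def Ssum (F : Type) [Field F] [Fintype F] (n m a : ℕ) : ℚ :=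
  ∑ g : Fin m → (Fin n → F),
    qPoch ((Fintype.card F : ℕ) : ℚ) (a - finrank F (span F (Set.range g)))

open scoped Classical in
lemma finrank_span_cons {n m : ℕ} (B : Fin m → (Fin n → F)) (v : Fin n → F) :
    finrank F (span F (Set.range (Fin.cons v B : Fin (m+1) → (Fin n → F))))
      = if v ∈ span F (Set.range B) then finrank F (span F (Set.range B))
        else finrank F (span F (Set.range B)) + 1 := by
  rw [Fin.range_cons]
  split_ifs with h
  · rw [Submodule.span_insert_eq_span h]
  · have hv0 : v ≠ 0 := fun hv => h (hv ▸ (span F (Set.range B)).zero_mem)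
    rw [Submodule.span_insert]
    have hdisj : Disjoint (span F (Set.range B)) (span F {v}) :=
      (Submodule.disjoint_span_singleton' hv0).mpr h
    have := Submodule.finrank_sup_add_finrank_inf_eq (span F (Set.range B)) (span F {v})
    rw [hdisj.eq_bot, finrank_bot, add_zero, finrank_span_singleton hv0] at this
    rw [sup_comm] at this
    omega

lemma finrank_span_le_n {n m : ℕ} (B : Fin m → (Fin n → F)) :
    finrank F (span F (Set.range B)) ≤ n := by
  have := Submodule.finrank_le (span F (Set.range B))
  rwa [Module.finrank_fin_fun] at this

lemma Ssum_zero (n a : ℕ) : Ssum F n 0 a = qPoch ((Fintype.card F : ℕ) : ℚ) a := by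
  rw [Ssum]
  rw [Fintype.sum_unique]
  have : Set.range (default : Fin 0 → (Fin n → F)) = ∅ := Set.range_eq_empty _
  rw [this, Submodule.span_empty, finrank_bot, Nat.sub_zero]

lemma Ssum_succ {n m a : ℕ} (ha : n < a) :
    Ssum F n (m + 1) a
      = (((Fintype.card F : ℕ) : ℚ) ^ n - ((Fintype.card F : ℕ) : ℚ) ^ a)
        * Ssum F n m (a - 1) := by
  classical
  have hq2 : 2 ≤ Fintype.card F := Fintype.one_lt_card
  rw [Ssum]
  rw [← (Fin.consEquiv (fun _ : Fin (m+1) => (Fin n → F))).sum_comp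
    (fun g => qPoch ((Fintype.card F : ℕ) : ℚ) (a - finrank F (span F (Set.range g))))]
  rw [Fintype.sum_prod_type]
  rw [Finset.sum_comm]
  rw [Ssum, Finset.mul_sum]
  refine Finset.sum_congr rfl fun B _ => ?_
  set W : Submodule F (Fin n → F) := span F (Set.range B) with hW
  set s : ℕ := finrank F W with hs
  have hsn : s ≤ n := finrank_span_le_n B
  have hsa : s < a := lt_of_le_of_lt hsn ha
  have hcons : ∀ v : Fin n → F,
      qPoch ((Fintype.card F : ℕ) : ℚ) (a - finrank F (span F (Set.range
          ((Fin.consEquiv (fun _ : Fin (m+1) => (Fin n → F))) (v, B)))))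
        = if v ∈ W then qPoch ((Fintype.card F : ℕ) : ℚ) (a - s)
          else qPoch ((Fintype.card F : ℕ) : ℚ) (a - (s + 1)) := by
    intro v
    have h0 : ((Fin.consEquiv (fun _ : Fin (m+1) => (Fin n → F))) (v, B)) = Fin.cons v B := rfl
    rw [h0, finrank_span_cons]
    split_ifs with h <;> rfl
  simp only [hcons]
  rw [Finset.sum_ite, Finset.sum_const, Finset.sum_const]
  have hcardW : (Finset.univ.filter (fun v => v ∈ W)).card = Fintype.card F ^ s := by
    rw [← Fintype.card_subtype]
    have h1 : Fintype.card {v // v ∈ W} = Fintype.card F ^ finrank F W := card_eq_pow_finrank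
    rw [h1, hs]
  have hcardV : (Finset.univ : Finset (Fin n → F)).card = Fintype.card F ^ n := by
    simp [Finset.card_univ, Fintype.card_fun]
  have hcardW' : (Finset.univ.filter (fun v => ¬ v ∈ W)).card
      = Fintype.card F ^ n - Fintype.card F ^ s := by
    have h2 := Finset.card_filter_add_card_filter_not
      (s := (Finset.univ : Finset (Fin n → F))) (p := fun v => v ∈ W)
    omega
  rw [hcardW, hcardW']
  have hpow : Fintype.card F ^ s ≤ Fintype.card F ^ n := Nat.pow_le_pow_right (by omega) hsn
  have hcast : ((Fintype.card F ^ n - Fintype.card F ^ s : ℕ) : ℚ)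
      = ((Fintype.card F : ℕ) : ℚ) ^ n - ((Fintype.card F : ℕ) : ℚ) ^ s := by
    push_cast [Nat.cast_sub hpow]; ring
  have e1 : a - s = ((a - 1) - s) + 1 := by omega
  have e2 : a - (s + 1) = (a - 1) - s := by omega
  rw [e1, e2, qPoch_succ]
  have e3 : (a - 1) - s + 1 = a - s := by omega
  rw [e3]
  have e4 : ((Fintype.card F : ℕ) : ℚ) ^ s * ((Fintype.card F : ℕ) : ℚ) ^ (a - s)
      = ((Fintype.card F : ℕ) : ℚ) ^ a := by
    rw [← pow_add]; congr 1; omega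
  simp only [nsmul_eq_mul, hcast]
  push_cast
  linear_combination (-(qPoch ((Fintype.card F : ℕ) : ℚ) (a - 1 - s))) * e4

lemma Ssum_eq (n m a : ℕ) (ha : n + m ≤ a) :
    Ssum F n m a * qPoch ((Fintype.card F : ℕ) : ℚ) (a - n - m)
      = ((Fintype.card F : ℕ) : ℚ) ^ (n * m)
        * (qPoch ((Fintype.card F : ℕ) : ℚ) (a - n)
          * qPoch ((Fintype.card F : ℕ) : ℚ) (a - m)) := by
  induction m generalizing a with
  | zero =>
      rw [Ssum_zero]
      simp only [Nat.sub_zero, Nat.mul_zero, pow_zero, one_mul]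
      ring
  | succ m ih =>
      have ha1 : n + m ≤ a - 1 := by omega
      have hna : n < a := by omega
      rw [Ssum_succ hna]
      have e1 : a - n - (m + 1) = (a - 1) - n - m := by omega
      have e2 : a - (m + 1) = (a - 1) - m := by omega
      rw [e1, e2, mul_assoc, ih (a-1) ha1]
      have hP : qPoch ((Fintype.card F : ℕ) : ℚ) ((a - 1 - n) + 1)
          = qPoch ((Fintype.card F : ℕ) : ℚ) (a - 1 - n)
            * (1 - ((Fintype.card F : ℕ) : ℚ) ^ ((a - 1 - n) + 1)) := qPoch_succ _ _
      have e3 : a - 1 - n + 1 = a - n := by omega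
      rw [e3] at hP
      have e5 : ((Fintype.card F : ℕ) : ℚ) ^ n * ((Fintype.card F : ℕ) : ℚ) ^ (a - n)
          = ((Fintype.card F : ℕ) : ℚ) ^ a := by
        rw [← pow_add]; congr 1; omega
      have e6 : ((Fintype.card F : ℕ) : ℚ) ^ (n * (m + 1))
          = ((Fintype.card F : ℕ) : ℚ) ^ (n * m) * ((Fintype.card F : ℕ) : ℚ) ^ n := by
        rw [Nat.mul_succ, pow_add]
      rw [hP, e6]
      linear_combination (((Fintype.card F : ℕ) : ℚ) ^ (n * m)
        * qPoch ((Fintype.card F : ℕ) : ℚ) (a - 1 - n)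
        * qPoch ((Fintype.card F : ℕ) : ℚ) (a - 1 - m)) * e5

end FieldCount

/-- Lemma `rnmrchu` (a q-analogue of the Chu–Vandermonde identity):
for `a ≥ n + m`, `∑_{r ≥ 0} R_q(n,m,r)·(q;q)_{a−r}
  = q^{nm}·(q;q)_{a−n}(q;q)_{a−m}/(q;q)_{a−n−m}`. -/
theorem stmt_0 (F : Type) [Field F] [Fintype F] (q : ℕ) (hq : Fintype.card F = q)
    (n m a : ℕ) (ha : n + m ≤ a) :
    ∑ r ∈ Finset.range (min n m + 1), (Rcount F n m r : ℚ) * qPoch (q : ℚ) (a - r)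
      = (q : ℚ) ^ (n * m) * (qPoch (q : ℚ) (a - n) * qPoch (q : ℚ) (a - m))
          / qPoch (q : ℚ) (a - n - m) := by
  classical
  subst hq
  set q : ℕ := Fintype.card F with hqdef
  have hq2 : 2 ≤ q := Fintype.one_lt_card
  -- step 1: fiberwise sum equals sum over matrices
  have h1 : ∑ r ∈ Finset.range (min n m + 1), (Rcount F n m r : ℚ) * qPoch (q : ℚ) (a - r)
      = ∑ A : Matrix (Fin n) (Fin m) F, qPoch (q : ℚ) (a - A.rank) := by
    have hmaps : ∀ A ∈ (Finset.univ : Finset (Matrix (Fin n) (Fin m) F)),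
        A.rank ∈ Finset.range (min n m + 1) := by
      intro A _
      rw [Finset.mem_range]
      have h1 := A.rank_le_card_height
      have h2 := A.rank_le_card_width
      simp only [Fintype.card_fin] at h1 h2
      omega
    rw [← Finset.sum_fiberwise_of_maps_to hmaps (fun A => qPoch (q : ℚ) (a - A.rank))]
    refine Finset.sum_congr rfl fun r _ => ?_
    have : ∑ A ∈ Finset.univ.filter (fun A : Matrix (Fin n) (Fin m) F => A.rank = r),
        qPoch (q : ℚ) (a - A.rank)
        = ∑ A ∈ Finset.univ.filter (fun A : Matrix (Fin n) (Fin m) F => A.rank = r),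
          qPoch (q : ℚ) (a - r) := by
      refine Finset.sum_congr rfl fun A hA => ?_
      rw [Finset.mem_filter] at hA
      rw [hA.2]
    rw [this, Finset.sum_const, nsmul_eq_mul]
    congr 2
    rw [Rcount, Nat.card_eq_fintype_card, Fintype.card_subtype]
  -- step 2: sum over matrices equals Ssum
  have h2 : ∑ A : Matrix (Fin n) (Fin m) F, qPoch (q : ℚ) (a - A.rank) = Ssum F n m a := by
    rw [Ssum]
    refine Fintype.sum_bijective (fun A : Matrix (Fin n) (Fin m) F => Aᵀ)
      ⟨fun A B hAB => by simpa using congrArg Matrix.transpose hAB,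
       fun g => ⟨(Matrix.of g)ᵀ, rfl⟩⟩ _ _ fun A => ?_
    congr 1
    rw [Matrix.rank_eq_finrank_span_cols]
    rfl
  rw [h1, h2]
  rw [eq_div_iff (qPoch_ne_zero hq2 (a - n - m))]
  exact Ssum_eq n m a ha
end

section
/- Let k ≥ 2 and let d be a positive divisor of the positive integer n. Then the rational function a_{k;n,d}(x) = ((x^d − 1)/(x^n − 1)) · ∑_{m : d ∣ m ∣ n} μ(m/d) · (−1)^{k(n − n/m)} · x^{(k−2)(n/2)(n/m − 1)} is a polynomial with integer coefficients; equivalently, (x^n − 1) divides (x^d − 1) · ∑_{m : d ∣ m ∣ n} μ(m/d) · (−1)^{k(n − n/m)} · x^{(k−2)(n/2)(n/m − 1)} in ℤ[x]. -/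
open Polynomial ArithmeticFunction Finset
open scoped ArithmeticFunction.Moebius

lemma aux_pow_mod (n a : ℕ) : (X ^ n - 1 : ℤ[X]) ∣ X ^ a - X ^ (a % n) := by
  have h1 : (X ^ n - 1 : ℤ[X]) ∣ (X ^ n) ^ (a / n) - 1 := by
    simpa using sub_dvd_pow_sub_pow (X ^ n : ℤ[X]) 1 (a / n)
  have h2 : (X : ℤ[X]) ^ a - X ^ (a % n) = X ^ (a % n) * ((X ^ n) ^ (a / n) - 1) := by
    rw [mul_sub, mul_one, ← pow_mul, ← pow_add, Nat.mod_add_div a n]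
  rw [h2]
  exact Dvd.dvd.mul_left h1 _

lemma aux_moebius_sum (N : ℕ) :
    ∑ j ∈ N.divisors, (μ j : ℤ) = if N = 1 then 1 else 0 := by
  have := ArithmeticFunction.coe_mul_zeta_apply (f := (μ : ArithmeticFunction ℤ)) (x := N)
  rw [ArithmeticFunction.moebius_mul_coe_zeta] at this
  rw [← this, ArithmeticFunction.one_apply]

lemma aux_filter_even (N : ℕ) (h0 : 0 < N) (he : 2 ∣ N) :
    N.divisors.filter (fun j => Even (N / j)) = (N / 2).divisors := by
  ext j
  simp only [Finset.mem_filter, Nat.mem_divisors]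
  constructor
  · rintro ⟨⟨hj, hN⟩, hev⟩
    have h2 : j * 2 ∣ N := (Nat.dvd_div_iff_mul_dvd hj).mp hev.two_dvd
    refine ⟨(Nat.dvd_div_iff_mul_dvd he).mpr (by rwa [mul_comm] at h2), by omega⟩
  · rintro ⟨hj, hN⟩
    have h2 : 2 * j ∣ N := (Nat.dvd_div_iff_mul_dvd he).mp hj
    have hjN : j ∣ N := dvd_of_mul_left_dvd h2
    refine ⟨⟨hjN, by omega⟩, ?_⟩
    have h3 : 2 ∣ N / j := (Nat.dvd_div_iff_mul_dvd hjN).mpr (by rwa [mul_comm] at h2)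
    obtain ⟨c, hc⟩ := h3
    exact ⟨c, by omega⟩

lemma aux_sumB (N : ℕ) (h0 : 0 < N) :
    ∑ j ∈ N.divisors.filter (fun j => Even (N / j)), (μ j : ℤ) = if N = 2 then 1 else 0 := by
  rcases Nat.even_or_odd N with he | ho
  · obtain ⟨M, hM⟩ := he
    rw [aux_filter_even N h0 (⟨M, by omega⟩ : 2 ∣ N), aux_moebius_sum]
    have : N / 2 = M := by omega
    rw [this]
    rcases eq_or_ne M 1 with rfl | hM1
    · rw [if_pos rfl, if_pos (by omega)]
    · rw [if_neg hM1, if_neg (by omega)]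
  · rw [Finset.filter_false_of_mem, Finset.sum_empty,
      if_neg (by rintro rfl; rw [Nat.odd_iff] at ho; omega)]
    intro j hj hev
    rw [Nat.mem_divisors] at hj
    have : 2 ∣ N := dvd_trans hev.two_dvd (Nat.div_dvd_of_dvd hj.1)
    rw [Nat.odd_iff] at ho; omega

/-- Lemma `lemand` (I), first claim: for `k ≥ 2` and `d ∣ n`,
`(x^n − 1)` divides `(x^d − 1) · ∑_{d ∣ m ∣ n} μ(m/d)·(−1)^{k(n − n/m)}·x^{(k−2)(n/2)(n/m − 1)}`
in `ℤ[x]`; equivalently `a_{k;n,d}(x)` is a polynomial with integer coefficients.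
(Since `n(n/m − 1)` is always even, the exponent is written `((k−2)·(n·(n/m − 1)))/2`.) -/
theorem stmt_3 (k n d : ℕ) (hk : 2 ≤ k) (hn : 0 < n) (hd : 0 < d) (hdn : d ∣ n) :
    (X ^ n - 1 : ℤ[X]) ∣
      (X ^ d - 1) *
        ∑ m ∈ n.divisors.filter (fun m => d ∣ m),
          C ((ArithmeticFunction.moebius (m / d) : ℤ) * (-1) ^ (k * (n - n / m))) *
            X ^ ((k - 2) * (n * (n / m - 1)) / 2) := by
  have hN0 : 0 < n / d := Nat.div_pos (Nat.le_of_dvd hn hdn) hd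
  set N := n / d with hNdef
  have hdN : d * N = n := Nat.mul_div_cancel' hdn
  have hNn : N ∣ n := Dvd.intro_left d hdN
  -- Step 1: reindex
  have hre : (∑ m ∈ n.divisors.filter (fun m => d ∣ m),
        C ((μ (m / d) : ℤ) * (-1) ^ (k * (n - n / m))) * X ^ ((k - 2) * (n * (n / m - 1)) / 2))
      = ∑ j ∈ N.divisors,
        C ((μ j : ℤ) * (-1) ^ (k * (n - N / j))) * X ^ ((k - 2) * (n * (N / j - 1)) / 2) := by
    refine Finset.sum_nbij' (fun m => m / d) (fun j => d * j) ?_ ?_ ?_ ?_ ?_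
    · intro m hm
      simp only [Finset.mem_filter, Nat.mem_divisors] at hm
      obtain ⟨⟨hmn, _⟩, hdm⟩ := hm
      obtain ⟨j, rfl⟩ := hdm
      show d * j / d ∈ N.divisors
      rw [Nat.mul_div_cancel_left j hd, Nat.mem_divisors]
      exact ⟨(mul_dvd_mul_iff_left (by omega : d ≠ 0)).mp (hdN ▸ hmn), by omega⟩
    · intro j hj
      rw [Nat.mem_divisors] at hj
      simp only [Finset.mem_filter, Nat.mem_divisors]
      exact ⟨⟨hdN ▸ mul_dvd_mul_left d hj.1, by omega⟩, Dvd.intro j rfl⟩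
      
    · intro m hm
      simp only [Finset.mem_filter] at hm
      exact Nat.mul_div_cancel' hm.2
    · intro j hj
      exact Nat.mul_div_cancel_left j hd
    · intro m hm
      simp only [Finset.mem_filter, Nat.mem_divisors] at hm
      obtain ⟨⟨hmn, _⟩, hdm⟩ := hm
      obtain ⟨j, rfl⟩ := hdm
      show _ = C ((μ (d * j / d) : ℤ) * (-1) ^ (k * (n - N / (d * j / d)))) *
        X ^ ((k - 2) * (n * (N / (d * j / d) - 1)) / 2)
      rw [Nat.mul_div_cancel_left j hd, show n / (d * j) = N / j from by
        rw [← hdN, Nat.mul_div_mul_left _ _ hd]]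
  rw [hre]
  -- basic facts about q = N / j
  have hqfacts : ∀ j ∈ N.divisors, 0 < N / j ∧ N / j ∣ n ∧ N / j ≤ n := by
    intro j hj
    rw [Nat.mem_divisors] at hj
    have h1 : 0 < N / j := Nat.div_pos (Nat.le_of_dvd hN0 hj.1)
      (Nat.pos_of_dvd_of_pos hj.1 hN0)
    have h2 : N / j ∣ n := dvd_trans (Nat.div_dvd_of_dvd hj.1) hNn
    exact ⟨h1, h2, Nat.le_of_dvd hn h2⟩
  -- Step 2: reduce exponents mod n
  have hred : ∀ j ∈ N.divisors, ((k - 2) * (n * (N / j - 1)) / 2) % n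
      = if Even (N / j) then (n / 2) * (k % 2) else 0 := by
    intro j hj
    obtain ⟨hq0, hqn, hqle⟩ := hqfacts j hj
    set q := N / j with hq
    obtain ⟨a, ha⟩ : ∃ a, k = a + 2 := ⟨k - 2, by omega⟩
    obtain ⟨b, hb⟩ : ∃ b, q = b + 1 := ⟨q - 1, by omega⟩
    have hka : k - 2 = a := by omega
    have hqb : q - 1 = b := by omega
    rw [hka, hqb]
    rcases Nat.even_or_odd q with hqe | hqo
    · rw [if_pos hqe]
      have hn2 : 2 ∣ n := dvd_trans hqe.two_dvd hqn
      obtain ⟨h, hh⟩ := hn2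
      obtain ⟨f, hf⟩ : ∃ f, b = 2 * f + 1 := by
        rw [Nat.even_iff] at hqe; exact ⟨b / 2, by omega⟩
      rcases Nat.even_or_odd k with hke | hko
      · obtain ⟨e, he⟩ : ∃ e, a = 2 * e := by
          rw [Nat.even_iff] at hke; exact ⟨a / 2, by omega⟩
        have : a * (n * b) = 2 * (n * (e * b)) := by rw [he]; ring
        rw [this, Nat.mul_div_cancel_left _ (by norm_num : 0 < 2), Nat.mul_mod_right,
          Nat.even_iff.mp hke, mul_zero]
      · obtain ⟨e, he⟩ : ∃ e, a = 2 * e + 1 := by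
          rw [Nat.odd_iff] at hko; exact ⟨a / 2, by omega⟩
        have h1 : a * (n * b) = 2 * (n * (e * b + f) + h) := by rw [he, hf, hh]; ring
        rw [h1, Nat.mul_div_cancel_left _ (by norm_num : 0 < 2), Nat.mul_add_mod,
          Nat.mod_eq_of_lt (by omega), Nat.odd_iff.mp hko]
        omega
    · rw [if_neg (Nat.not_even_iff_odd.mpr hqo)]
      obtain ⟨c, hc⟩ : ∃ c, b = 2 * c := by
        rw [Nat.odd_iff] at hqo; exact ⟨b / 2, by omega⟩
      have : a * (n * b) = 2 * (n * (a * c)) := by rw [hc]; ring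
      rw [this, Nat.mul_div_cancel_left _ (by norm_num : 0 < 2), Nat.mul_mod_right]
  -- Step 3: replace by reduced polynomial G
  set G : ℤ[X] := ∑ j ∈ N.divisors,
      C ((μ j : ℤ) * (-1) ^ (k * (n - N / j))) *
        X ^ (if Even (N / j) then (n / 2) * (k % 2) else 0) with hGdef
  have hSG : (X ^ n - 1 : ℤ[X]) ∣
      (∑ j ∈ N.divisors,
        C ((μ j : ℤ) * (-1) ^ (k * (n - N / j))) * X ^ ((k - 2) * (n * (N / j - 1)) / 2)) - G := by
    rw [hGdef, ← Finset.sum_sub_distrib]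
    refine Finset.dvd_sum fun j hj => ?_
    rw [← mul_sub, ← hred j hj]
    exact Dvd.dvd.mul_left (aux_pow_mod n _) _
  have hstep : (X ^ d - 1 : ℤ[X]) *
      (∑ j ∈ N.divisors,
        C ((μ j : ℤ) * (-1) ^ (k * (n - N / j))) * X ^ ((k - 2) * (n * (N / j - 1)) / 2))
      = (X ^ d - 1) * G + (X ^ d - 1) *
        ((∑ j ∈ N.divisors,
          C ((μ j : ℤ) * (-1) ^ (k * (n - N / j))) * X ^ ((k - 2) * (n * (N / j - 1)) / 2)) - G) := by
    ring
  rw [hstep]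
  refine dvd_add ?_ (Dvd.dvd.mul_left hSG _)
  -- Step 4: case analysis on N, k, n
  rcases eq_or_ne N 1 with hN1 | hN1
  · have hdn' : d = n := by
      have h' := hdN
      rw [hN1, mul_one] at h'
      omega
    subst hdn'
    exact Dvd.dvd.mul_right dvd_rfl G
  rcases Nat.even_or_odd k with hke | hko
  · -- k even : G = C (∑ μ) = 0
    have hG : G = C (∑ j ∈ N.divisors, (μ j : ℤ)) := by
      rw [hGdef, map_sum]
      refine Finset.sum_congr rfl fun j hj => ?_
      have h1 : (-1 : ℤ) ^ (k * (n - N / j)) = 1 := Even.neg_one_pow (hke.mul_right _)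
      have h2 : (if Even (N / j) then (n / 2) * (k % 2) else 0) = 0 := by
        rw [Nat.even_iff.mp hke, mul_zero]; simp
      rw [h1, h2, mul_one, pow_zero, mul_one]
    rw [hG, aux_moebius_sum, if_neg hN1, Polynomial.C_0, mul_zero]
    exact dvd_zero _
  rcases Nat.even_or_odd n with hne | hno
  · -- n even, k odd
    have hsplit : G = (∑ j ∈ N.divisors.filter (fun j => Even (N / j)),
          C ((μ j : ℤ) * (-1) ^ (k * (n - N / j))) *
            X ^ (if Even (N / j) then (n / 2) * (k % 2) else 0))
        + ∑ j ∈ N.divisors.filter (fun j => ¬ Even (N / j)),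
          C ((μ j : ℤ) * (-1) ^ (k * (n - N / j))) *
            X ^ (if Even (N / j) then (n / 2) * (k % 2) else 0) := by
      rw [hGdef, Finset.sum_filter_add_sum_filter_not]
    have hB : ∑ j ∈ N.divisors.filter (fun j => Even (N / j)),
          C ((μ j : ℤ) * (-1) ^ (k * (n - N / j))) *
            X ^ (if Even (N / j) then (n / 2) * (k % 2) else 0)
        = C (if N = 2 then (1 : ℤ) else 0) * X ^ (n / 2) := by
      rw [← aux_sumB N hN0, map_sum, Finset.sum_mul]
      refine Finset.sum_congr rfl fun j hj => ?_
      rw [Finset.mem_filter] at hj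
      obtain ⟨hj, hjev⟩ := hj
      obtain ⟨hq0, hqn, hqle⟩ := hqfacts j hj
      have h1 : (-1 : ℤ) ^ (k * (n - N / j)) = 1 := by
        refine Even.neg_one_pow (Even.mul_left ?_ k)
        rw [Nat.even_iff] at hne hjev ⊢
        omega
      rw [if_pos hjev, h1, mul_one, Nat.odd_iff.mp hko, mul_one]
    have hA : ∑ j ∈ N.divisors.filter (fun j => ¬ Even (N / j)),
          C ((μ j : ℤ) * (-1) ^ (k * (n - N / j))) *
            X ^ (if Even (N / j) then (n / 2) * (k % 2) else 0)
        = C (- ∑ j ∈ N.divisors.filter (fun j => ¬ Even (N / j)), (μ j : ℤ)) := by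
      rw [← Finset.sum_neg_distrib, map_sum]
      refine Finset.sum_congr rfl fun j hj => ?_
      rw [Finset.mem_filter] at hj
      obtain ⟨hj, hjodd⟩ := hj
      obtain ⟨hq0, hqn, hqle⟩ := hqfacts j hj
      have h1 : (-1 : ℤ) ^ (k * (n - N / j)) = -1 := by
        refine Odd.neg_one_pow (Odd.mul hko ?_)
        rw [Nat.even_iff] at hne
        rw [Nat.odd_iff]
        rw [Nat.even_iff] at hjodd
        omega
      rw [if_neg hjodd, h1, pow_zero, mul_one, mul_neg_one, map_neg]
    have hAval : ∑ j ∈ N.divisors.filter (fun j => ¬ Even (N / j)), (μ j : ℤ)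
        = - (if N = 2 then (1 : ℤ) else 0) := by
      have h1 := Finset.sum_filter_add_sum_filter_not N.divisors (fun j => Even (N / j))
        (fun j => (μ j : ℤ))
      rw [aux_sumB N hN0, aux_moebius_sum, if_neg hN1] at h1
      linarith [h1]
    rcases eq_or_ne N 2 with hN2 | hN2
    · rw [hsplit, hB, hA, hAval, if_pos hN2, map_one, one_mul]
      have hd2 : d * 2 = n := hN2 ▸ hdN
      have hnd : n = d + d := by omega
      have hhalf : n / 2 = d := by omega
      rw [hhalf]
      refine Dvd.intro 1 ?_
      rw [mul_one, hnd]
      norm_num only [Polynomial.C_1]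
      ring
    · rw [hsplit, hB, hA, hAval, if_neg hN2]
      simp
  · -- n odd, k odd : all q odd, G = C (∑ μ) = 0
    have hG : G = C (∑ j ∈ N.divisors, (μ j : ℤ)) := by
      rw [hGdef, map_sum]
      refine Finset.sum_congr rfl fun j hj => ?_
      obtain ⟨hq0, hqn, hqle⟩ := hqfacts j hj
      have hqodd : ¬ Even (N / j) := by
        intro hev
        have := dvd_trans hev.two_dvd hqn
        rw [Nat.odd_iff] at hno
        omega
      have h1 : (-1 : ℤ) ^ (k * (n - N / j)) = 1 := by
        refine Even.neg_one_pow (Even.mul_left ?_ k)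
        rw [Nat.odd_iff] at hno
        rw [Nat.even_iff]
        have : (N / j) % 2 = 1 := by
          rcases Nat.even_or_odd (N / j) with h | h
          · exact absurd h hqodd
          · exact Nat.odd_iff.mp h
        omega
      rw [h1, if_neg hqodd, mul_one, pow_zero, mul_one]
    rw [hG, aux_moebius_sum, if_neg hN1, Polynomial.C_0, mul_zero]
    exact dvd_zero _
end

section
/- Let k > 2 and let d be a positive divisor of the positive integer n. Then the polynomial a_{k;n,d}(x) has degree (n(k−2) − 2d)(n − d)/(2d) and its leading coefficient equals (−1)^{k(n − n/d)}. -/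
open Polynomial

/-- The polynomial `S_{k;n,d}(x) = ∑_{d ∣ m ∣ n} μ(m/d)·(−1)^{k(n − n/m)}·x^{(k−2)(n/2)(n/m − 1)}`
in `ℤ[x]`, so that `a_{k;n,d}(x) = ((x^d − 1)/(x^n − 1))·S_{k;n,d}(x)`. -/
noncomputable def sPoly (k n d : ℕ) : ℤ[X] :=
  ∑ m ∈ n.divisors.filter (fun m => d ∣ m),
    C ((ArithmeticFunction.moebius (m / d) : ℤ) * (-1) ^ (k * (n - n / m))) *
      X ^ ((k - 2) * (n * (n / m - 1)) / 2)

/-- Lemma `lemand` (II), case `k > 2`: the polynomial `a_{k;n,d}(x)`, i.e. the (unique)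
polynomial `p` with `(x^n − 1)·p = (x^d − 1)·S_{k;n,d}(x)`, has degree
`(n(k−2) − 2d)(n − d)/(2d)` and leading coefficient `(−1)^{k(n − n/d)}`. -/
theorem stmt_6 (k n d : ℕ) (hk : 2 < k) (hn : 0 < n) (hd : 0 < d) (hdn : d ∣ n) :
    ∀ p : ℤ[X], (X ^ n - 1) * p = (X ^ d - 1) * sPoly k n d →
      p.natDegree = (n * (k - 2) - 2 * d) * (n - d) / (2 * d) ∧
        p.leadingCoeff = (-1) ^ (k * (n - n / d)) := by
  intro p hp
  have hpar : ∀ s : ℕ, s ∣ n → 2 ∣ n * (s - 1) := by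
    intro s hs
    rcases Nat.even_or_odd n with he | ho
    · exact Dvd.dvd.mul_right he.two_dvd _
    · have hn2 : n % 2 = 1 := Nat.odd_iff.mp ho
      have h2s : ¬ 2 ∣ s := by
        intro h
        have := h.trans hs
        omega
      exact Dvd.dvd.mul_left (by omega) n
  set F := n.divisors.filter (fun m => d ∣ m) with hF
  have hdF : d ∈ F := Finset.mem_filter.mpr ⟨Nat.mem_divisors.mpr ⟨hdn, hn.ne'⟩, dvd_rfl⟩
  have hlt : ∀ m ∈ F, m ≠ d →
      (k - 2) * (n * (n / m - 1)) / 2 < (k - 2) * (n * (n / d - 1)) / 2 := by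
    intro m hm hmd
    obtain ⟨hm', hdm⟩ := Finset.mem_filter.mp hm
    have hmn : m ∣ n := (Nat.mem_divisors.mp hm').1
    have hmpos : 0 < m := Nat.pos_of_mem_divisors hm'
    have hdm' : d < m := lt_of_le_of_ne (Nat.le_of_dvd hmpos hdm) (Ne.symm hmd)
    have hq1 : n / m * m = n := Nat.div_mul_cancel hmn
    have hq2 : n / d * d = n := Nat.div_mul_cancel hdn
    have hndpos : 0 < n / d := Nat.div_pos (Nat.le_of_dvd hn hdn) hd
    have hnmpos : 0 < n / m := Nat.div_pos (Nat.le_of_dvd hn hmn) hmpos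
    have hdivlt : n / m < n / d := by
      by_contra hcon
      push_neg at hcon
      have h2 : n / d * d < n / d * m := mul_lt_mul_of_pos_left hdm' hndpos
      have h3 : n / d * m ≤ n / m * m := Nat.mul_le_mul hcon (le_refl m)
      omega
    have hin : n * (n / m - 1) < n * (n / d - 1) :=
      mul_lt_mul_of_pos_left (by omega) hn
    have hout : (k - 2) * (n * (n / m - 1)) < (k - 2) * (n * (n / d - 1)) :=
      mul_lt_mul_of_pos_left hin (by omega)
    exact Nat.div_lt_div_of_lt_of_dvd
      ((hpar _ (Nat.div_dvd_of_dvd hdn)).mul_left _) hout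
  have hle : ∀ m ∈ F, (k - 2) * (n * (n / m - 1)) / 2 ≤ (k - 2) * (n * (n / d - 1)) / 2 := by
    intro m hm
    by_cases h : m = d
    · subst h; exact le_rfl
    · exact (hlt m hm h).le
  set E : ℕ := (k - 2) * (n * (n / d - 1)) / 2 with hE
  set c : ℤ := (-1) ^ (k * (n - n / d)) with hc
  have hScoeffE : (sPoly k n d).coeff E = c := by
    rw [sPoly, finset_sum_coeff, ← hF]
    refine (Finset.sum_eq_single d ?_ ?_).trans ?_
    · intro m hm hmd
      rw [coeff_C_mul, coeff_X_pow, if_neg (by have := hlt m hm hmd; omega), mul_zero]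
    · intro h; exact absurd hdF h
    · rw [coeff_C_mul, coeff_X_pow, if_pos rfl, mul_one, Nat.div_self hd]
      simp [hc]
  have hStop : ∀ j, E < j → (sPoly k n d).coeff j = 0 := by
    intro j hj
    rw [sPoly, finset_sum_coeff, ← hF]
    apply Finset.sum_eq_zero
    intro m hm
    rw [coeff_C_mul, coeff_X_pow, if_neg (by have := hle m hm; omega), mul_zero]
  have hcne : c ≠ 0 := by rw [hc]; exact pow_ne_zero _ (by norm_num)
  have hSdeg : (sPoly k n d).natDegree = E :=
    le_antisymm (natDegree_le_iff_coeff_eq_zero.mpr hStop)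
      (le_natDegree_of_ne_zero (hScoeffE ▸ hcne))
  have hSlead : (sPoly k n d).leadingCoeff = c := by
    rw [leadingCoeff, hSdeg, hScoeffE]
  have hSne : sPoly k n d ≠ 0 := leadingCoeff_ne_zero.mp (hSlead ▸ hcne)
  have hmonn : (X ^ n - 1 : ℤ[X]).Monic := by
    simpa using monic_X_pow_sub_C (1 : ℤ) hn.ne'
  have hmond : (X ^ d - 1 : ℤ[X]).Monic := by
    simpa using monic_X_pow_sub_C (1 : ℤ) hd.ne'
  have hdegn : (X ^ n - 1 : ℤ[X]).natDegree = n := by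
    simpa using natDegree_X_pow_sub_C (n := n) (r := (1 : ℤ))
  have hdegd : (X ^ d - 1 : ℤ[X]).natDegree = d := by
    simpa using natDegree_X_pow_sub_C (n := d) (r := (1 : ℤ))
  have hpne : p ≠ 0 := by
    intro h
    rw [h, mul_zero] at hp
    exact mul_ne_zero hmond.ne_zero hSne hp.symm
  have h1 : n + p.natDegree = d + E := by
    have := congrArg natDegree hp
    rwa [natDegree_mul hmonn.ne_zero hpne, natDegree_mul hmond.ne_zero hSne,
      hdegn, hdegd, hSdeg] at this
  have hlead : p.leadingCoeff = c := by
    have := congrArg leadingCoeff hp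
    rwa [leadingCoeff_mul, leadingCoeff_mul, hmonn.leadingCoeff, hmond.leadingCoeff,
      hSlead, one_mul, one_mul] at this
  refine ⟨?_, hlead⟩
  rcases eq_or_lt_of_le (Nat.le_of_dvd hn hdn) with heq | hlt'
  · -- d = n
    have hE0 : E = 0 := by rw [hE, heq, Nat.div_self hn]; simp
    rw [heq]
    have : p.natDegree = 0 := by omega
    rw [this, Nat.sub_self]
    simp
  · -- d < n
    have h2d : 2 * d ≤ n := by
      obtain ⟨t, ht⟩ := hdn
      have : 2 ≤ t := by
        rcases Nat.lt_or_ge t 2 with h | h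
        · interval_cases t <;> omega
        · exact h
      calc 2 * d = d * 2 := by ring
        _ ≤ d * t := Nat.mul_le_mul (le_refl d) this
        _ = n := ht.symm
    have hkn : 2 * d ≤ n * (k - 2) := le_trans h2d (Nat.le_mul_of_pos_right n (by omega))
    have htd : d * (n / d) = n := Nat.mul_div_cancel' hdn
    have ht1 : 1 ≤ n / d := Nat.div_pos (Nat.le_of_dvd hn hdn) hd
    have hEeq : 2 * E = (k - 2) * (n * (n / d - 1)) :=
      Nat.mul_div_cancel' ((hpar _ (Nat.div_dvd_of_dvd hdn)).mul_left _)
    have hnum : (n * (k - 2) - 2 * d) * (n - d) = 2 * d * p.natDegree := by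
      have h1' : (n : ℤ) + p.natDegree = d + E := by exact_mod_cast h1
      have htd' : (d : ℤ) * (n / d : ℕ) = n := by exact_mod_cast htd
      have hE' : 2 * (E : ℤ) = ((k : ℤ) - 2) * (n * ((n / d : ℕ) - 1)) := by
        zify [hk.le, ht1] at hEeq
        exact hEeq
      zify [hkn, h2d, le_of_lt hlt', hk.le]
      linear_combination (-2 * (d : ℤ)) * h1' + (-(d : ℤ)) * hE' +
        (-((k : ℤ) - 2) * n) * htd'
    rw [hnum]
    exact (Nat.mul_div_cancel_left _ (by omega)).symm
end

section
/- Let q be a prime power, F a finite field with q elements, n ≥ 1, and let ψ_0 : F → ℂ^× be a nontrivial additive character. Then ∑_{X ∈ M_n(F)} \overline{ψ_0}( tr X ) · (q;q)_{2n − 1 − rk X} = (−1)^n · q^{n^2} · q^{n(n−1)/2} · (q;q)_{n−1}. -/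
open Finset

namespace Stmt13Aux

/-! ### q-series machinery over ℂ -/

/-- numerator product `∏_{i<s} (Q^m - Q^i)` -/
noncomputable def Nprod (Q : ℂ) (m s : ℕ) : ℂ := ∏ i ∈ range s, (Q ^ m - Q ^ i)

/-- Gaussian binomial in ℂ -/
noncomputable def gbC (Q : ℂ) (m s : ℕ) : ℂ := Nprod Q m s / Nprod Q s s

/-- coefficient `(-1)^s Q^{s(s-1)/2}` -/
noncomputable def qcoef (Q : ℂ) (s : ℕ) : ℂ := (-1) ^ s * Q ^ (s * (s - 1) / 2)

variable {Q : ℂ} (hQ : ∀ i j : ℕ, i < j → Q ^ i ≠ Q ^ j) (hQ0 : Q ≠ 0)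

include hQ in
lemma Nprod_self_ne_zero (s : ℕ) : Nprod Q s s ≠ 0 := by
  rw [Nprod]
  apply Finset.prod_ne_zero_iff.2
  intro i hi
  rw [Finset.mem_range] at hi
  exact sub_ne_zero.2 (Ne.symm (hQ i s hi))

lemma Nprod_zero_of_lt {m s : ℕ} (h : m < s) : Nprod Q m s = 0 := by
  rw [Nprod]
  apply Finset.prod_eq_zero (Finset.mem_range.2 h)
  simp

lemma gbC_zero_of_lt {m s : ℕ} (h : m < s) : gbC Q m s = 0 := by
  rw [gbC, Nprod_zero_of_lt h, zero_div]

lemma gbC_zero_right (m : ℕ) : gbC Q m 0 = 1 := by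
  simp [gbC, Nprod]

lemma Nprod_succ_succ (m s : ℕ) :
    Nprod Q (m + 1) (s + 1) = (Q ^ (m + 1) - 1) * Q ^ s * Nprod Q m s := by
  rw [Nprod, Finset.prod_range_succ']
  have h : ∀ i, Q ^ (m + 1) - Q ^ (i + 1) = Q * (Q ^ m - Q ^ i) := by
    intro i; ring
  rw [Finset.prod_congr rfl fun i _ => h i, Finset.prod_mul_distrib,
    Finset.prod_const, Nprod, Finset.card_range]
  ring

lemma Nprod_succ_right (m s : ℕ) :
    Nprod Q m (s + 1) = Nprod Q m s * (Q ^ m - Q ^ s) := by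
  rw [Nprod, Finset.prod_range_succ, Nprod]

include hQ hQ0 in
lemma gbC_pascal (m s : ℕ) :
    Q ^ s * gbC Q (m + 1) (s + 1)
      = Q ^ s * gbC Q m (s + 1) + Q ^ m * gbC Q m s := by
  have hD : Nprod Q s s ≠ 0 := Nprod_self_ne_zero hQ s
  have hD1 : Nprod Q (s+1) (s+1) ≠ 0 := Nprod_self_ne_zero hQ (s+1)
  have h1 : Q ^ (s + 1) - (1:ℂ) ≠ 0 := by
    have := hQ 0 (s+1) (Nat.succ_pos s)
    simpa [sub_ne_zero] using (Ne.symm this)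
  have e1 : Nprod Q (m+1) (s+1) = (Q ^ (m + 1) - 1) * Q ^ s * Nprod Q m s :=
    Nprod_succ_succ m s
  have e2 : Nprod Q m (s+1) = Nprod Q m s * (Q ^ m - Q ^ s) := Nprod_succ_right m s
  have e3 : Nprod Q (s+1) (s+1) = (Q ^ (s + 1) - 1) * Q ^ s * Nprod Q s s :=
    Nprod_succ_succ s s
  rw [gbC, gbC, gbC, e1, e2, e3]
  have hQs : (Q:ℂ) ^ s ≠ 0 := pow_ne_zero s hQ0
  field_simp
  ring

lemma qcoef_succ (s : ℕ) : qcoef Q (s + 1) = -(Q ^ s) * qcoef Q s := by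
  rw [qcoef, qcoef, pow_succ]
  have h : (s + 1) * (s + 1 - 1) / 2 = s * (s - 1) / 2 + s := by
    rw [← Nat.choose_two_right, ← Nat.choose_two_right]
    have hp : (s+1).choose 2 = s.choose 1 + s.choose 2 := Nat.choose_succ_succ s 1
    rw [Nat.choose_one_right] at hp
    omega
  rw [h, pow_add]
  ring

include hQ hQ0 in
lemma qbt (x : ℂ) (m : ℕ) :
    ∏ i ∈ range m, (1 - x * Q ^ i)
      = ∑ s ∈ range (m + 1), qcoef Q s * x ^ s * gbC Q m s := by
  induction m with
  | zero => simp [qcoef, gbC, Nprod]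
  | succ m ih =>
    rw [Finset.prod_range_succ, ih]
    rw [Finset.sum_range_succ' (fun s => qcoef Q s * x ^ s * gbC Q (m+1) s) (m+1)]
    have hs0 : qcoef Q 0 * x ^ 0 * gbC Q (m+1) 0 = 1 := by
      simp [qcoef, gbC_zero_right]
    rw [hs0]
    have hterm : ∀ t, qcoef Q (t+1) * x ^ (t+1) * gbC Q (m+1) (t+1)
        = qcoef Q (t+1) * x ^ (t+1) * gbC Q m (t+1)
          - x * Q ^ m * (qcoef Q t * x ^ t * gbC Q m t) := by
      intro t
      have hp := gbC_pascal hQ hQ0 m t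
      have hQt : (Q:ℂ) ^ t ≠ 0 := pow_ne_zero t hQ0
      have hgb : gbC Q (m + 1) (t + 1)
          = gbC Q m (t + 1) + Q ^ m * (Q ^ t)⁻¹ * gbC Q m t := by
        field_simp at hp ⊢
        linear_combination hp
      rw [hgb, qcoef_succ]
      field_simp
      ring
    rw [Finset.sum_congr rfl fun t _ => hterm t, Finset.sum_sub_distrib, ← Finset.mul_sum]
    have hshift : ∑ s ∈ range (m+1), qcoef Q s * x ^ s * gbC Q m s
        = ∑ t ∈ range (m+1), qcoef Q (t+1) * x ^ (t+1) * gbC Q m (t+1) + 1 := by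
      have h2 := Finset.sum_range_succ' (fun s => qcoef Q s * x ^ s * gbC Q m s) (m+1)
      rw [Finset.sum_range_succ (fun s => qcoef Q s * x ^ s * gbC Q m s) (m+1)] at h2
      have hz : qcoef Q (m+1) * x ^ (m+1) * gbC Q m (m+1) = 0 := by
        rw [gbC_zero_of_lt (Nat.lt_succ_self m), mul_zero]
      have hs0' : qcoef Q 0 * x ^ 0 * gbC Q m 0 = 1 := by
        simp [qcoef, gbC_zero_right]
      rw [hz, add_zero, hs0'] at h2
      exact h2
    linear_combination hshift

include hQ hQ0 in
lemma expand_qPoch (n m : ℕ) (hn : 1 ≤ n) (hm : m ≤ n) :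
    ∏ i ∈ range (n - 1 + m), (1 - Q ^ (i + 1))
      = (∏ i ∈ range (n - 1), (1 - Q ^ (i + 1)))
        * ∑ s ∈ range (n + 1), qcoef Q s * (Q ^ n) ^ s * gbC Q m s := by
  rw [Finset.prod_range_add]
  congr 1
  have hf : ∀ i, (1:ℂ) - Q ^ (n - 1 + i + 1) = 1 - Q ^ n * Q ^ i := by
    intro i
    have : n - 1 + i + 1 = n + i := by omega
    rw [this, pow_add]
  rw [Finset.prod_congr rfl fun i _ => hf i, qbt hQ hQ0 (Q ^ n) m]
  apply Finset.sum_subset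
  · exact Finset.range_subset_range.2 (by omega)
  · intro s _ hs
    rw [Finset.mem_range, not_lt] at hs
    rw [gbC_zero_of_lt (by omega), mul_zero]

lemma Pprod_eval (s : ℕ) (y : ℂ) :
    (∏ i ∈ range s, (Polynomial.X - Polynomial.C (Q ^ i))).eval y
      = ∏ i ∈ range s, (y - Q ^ i) := by
  simp [Polynomial.eval_prod]

lemma Pprod_monic (s : ℕ) :
    (∏ i ∈ range s, (Polynomial.X - Polynomial.C ((Q:ℂ) ^ i))).Monic :=
  Polynomial.monic_prod_of_monic _ _ fun i _ => Polynomial.monic_X_sub_C _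

lemma Pprod_natDegree (s : ℕ) :
    (∏ i ∈ range s, (Polynomial.X - Polynomial.C ((Q:ℂ) ^ i))).natDegree = s := by
  rw [Polynomial.natDegree_prod_of_monic _ _ fun i _ => Polynomial.monic_X_sub_C _,
    Finset.sum_congr rfl fun i _ => Polynomial.natDegree_X_sub_C _,
    Finset.sum_const, Finset.card_range, smul_eq_mul, mul_one]

/-! ### matrix counting lemmas -/

variable {F : Type} [Field F] [Fintype F] [DecidableEq F] {n : ℕ}

set_option linter.unusedSectionVars false

lemma mul_eq_zero_iff_cols (X : Matrix (Fin n) (Fin n) F) {k : ℕ}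
    (A : Matrix (Fin n) (Fin k) F) :
    X * A = 0 ↔ ∀ j, X.mulVec (fun i => A i j) = 0 := by
  constructor
  · intro h j
    funext i
    have := congrFun (congrFun h i) j
    simpa [Matrix.mul_apply, Matrix.mulVec, dotProduct] using this
  · intro h
    ext i j
    have := congrFun (h j) i
    simpa [Matrix.mul_apply, Matrix.mulVec, dotProduct] using this

lemma ker_count (X : Matrix (Fin n) (Fin n) F) (k : ℕ) :
    (univ.filter fun A : Matrix (Fin n) (Fin k) F => X * A = 0).card
      = Fintype.card F ^ ((n - X.rank) * k) := by
  have hcard : (univ.filter fun A : Matrix (Fin n) (Fin k) F => X * A = 0).card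
      = Fintype.card {A : Matrix (Fin n) (Fin k) F // X * A = 0} := by
    rw [Fintype.card_subtype]
  rw [hcard]
  haveI : Fintype (LinearMap.ker X.mulVecLin) := Fintype.ofFinite _
  have e : {A : Matrix (Fin n) (Fin k) F // X * A = 0}
      ≃ (Fin k → LinearMap.ker X.mulVecLin) :=
    { toFun := fun A j => ⟨fun i => A.1 i j, by
        rw [LinearMap.mem_ker, Matrix.mulVecLin_apply]
        exact (mul_eq_zero_iff_cols X A.1).1 A.2 j⟩
      invFun := fun g => ⟨Matrix.of fun i j => (g j).1 i, by
        rw [mul_eq_zero_iff_cols]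
        intro j
        have := (g j).2
        rw [LinearMap.mem_ker, Matrix.mulVecLin_apply] at this
        exact this⟩
      left_inv := fun A => rfl
      right_inv := fun g => rfl }
  rw [Fintype.card_congr e, Fintype.card_fun]
  have hker : Fintype.card (LinearMap.ker X.mulVecLin)
      = Fintype.card F ^ (n - X.rank) := by
    rw [Module.card_eq_pow_finrank (K := F)]
    congr 1
    have h1 := LinearMap.finrank_range_add_finrank_ker X.mulVecLin
    have h2 : Module.finrank F (Fin n → F) = n := by simp
    have h3 : X.rank = Module.finrank F (LinearMap.range X.mulVecLin) := rfl
    omega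
  rw [hker, ← pow_mul, Fintype.card_fin]

lemma exists_trace_one_annih {k : ℕ} (A : Matrix (Fin n) (Fin k) F) (hA : A.rank < n) :
    ∃ X₀ : Matrix (Fin n) (Fin n) F, X₀ * A = 0 ∧ X₀.trace = 1 := by
  have hker : LinearMap.ker A.transpose.mulVecLin ≠ ⊥ := by
    intro hbot
    have h1 := LinearMap.finrank_range_add_finrank_ker A.transpose.mulVecLin
    have h2 : Module.finrank F (Fin n → F) = n := by simp
    have h3 : A.transpose.rank
        = Module.finrank F (LinearMap.range A.transpose.mulVecLin) := rfl
    have h4 : A.transpose.rank = A.rank := Matrix.rank_transpose A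
    rw [hbot] at h1
    simp only [finrank_bot] at h1
    omega
  obtain ⟨φ, hφmem, hφne⟩ := Submodule.ne_bot_iff _ |>.1 hker
  rw [LinearMap.mem_ker, Matrix.mulVecLin_apply] at hφmem
  obtain ⟨j₀, hj₀⟩ : ∃ j₀, φ j₀ ≠ 0 := by
    by_contra h
    push_neg at h
    exact hφne (funext h)
  refine ⟨Matrix.of fun i j => (Pi.single j₀ (φ j₀)⁻¹ : Fin n → F) i * φ j, ?_, ?_⟩
  · ext i j
    have hcol : ∑ l, φ l * A l j = 0 := by
      have := congrFun hφmem j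
      simpa [Matrix.mulVec, dotProduct, mul_comm] using this
    simp only [Matrix.mul_apply, Matrix.of_apply, Matrix.zero_apply, mul_assoc]
    rw [← Finset.mul_sum, hcol, mul_zero]
  · simp only [Matrix.trace, Matrix.diag, Matrix.of_apply]
    rw [Finset.sum_eq_single j₀]
    · simp [hj₀]
    · intro b _ hb
      simp [Pi.single_apply, hb]
    · simp

lemma sum_annih_zero (ψ : AddChar F ℂ) (hψ : ψ ≠ 1) {k : ℕ}
    (A : Matrix (Fin n) (Fin k) F) (hA : A.rank < n) :
    ∑ X ∈ univ.filter fun X : Matrix (Fin n) (Fin n) F => X * A = 0,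
      (starRingEnd ℂ) (ψ X.trace) = 0 := by
  obtain ⟨X₀, hX₀A, hX₀tr⟩ := exists_trace_one_annih A hA
  obtain ⟨a, ha⟩ := AddChar.ne_one_iff.1 hψ
  have ha' : (starRingEnd ℂ) (ψ a) ≠ 1 := by
    intro h
    apply ha
    have := congrArg (starRingEnd ℂ) h
    simpa using this
  set S := univ.filter fun X : Matrix (Fin n) (Fin n) F => X * A = 0 with hS
  set T := ∑ X ∈ S, (starRingEnd ℂ) (ψ X.trace) with hT
  have key : (starRingEnd ℂ) (ψ a) * T = T := by
    rw [hT, Finset.mul_sum]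
    refine Finset.sum_equiv (Equiv.addRight (a • X₀)) ?_ ?_
    · intro X
      simp only [hS, Finset.mem_filter, Finset.mem_univ, true_and, Equiv.coe_addRight,
        Matrix.add_mul, Matrix.smul_mul, hX₀A, smul_zero, add_zero]
    · intro X hX
      simp only [Equiv.coe_addRight]
      rw [Matrix.trace_add, Matrix.trace_smul, hX₀tr, smul_eq_mul, mul_one,
        AddChar.map_add_eq_mul, map_mul]
      ring
  have h0 : ((starRingEnd ℂ) (ψ a) - 1) * T = 0 := by
    rw [sub_mul, one_mul, key, sub_self]
  rcases mul_eq_zero.1 h0 with h | h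
  · exact absurd (by linear_combination h) ha'
  · exact h

lemma range_top_of_rank_eq {k : ℕ} (A : Matrix (Fin n) (Fin k) F) (hA : A.rank = n) :
    Function.Surjective A.mulVec := by
  have h : LinearMap.range A.mulVecLin = ⊤ := by
    apply Submodule.eq_top_of_finrank_eq
    have h3 : A.rank = Module.finrank F (LinearMap.range A.mulVecLin) := rfl
    simp [← h3, hA]
  intro v
  obtain ⟨w, hw⟩ := LinearMap.range_eq_top.1 h v
  exact ⟨w, by rw [← Matrix.mulVecLin_apply]; exact hw⟩

lemma annih_eq_zero {k : ℕ} (A : Matrix (Fin n) (Fin k) F) (hA : A.rank = n)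
    (X : Matrix (Fin n) (Fin n) F) (hX : X * A = 0) : X = 0 := by
  have hsurj := range_top_of_rank_eq A hA
  have hzero : ∀ v, X.mulVec v = 0 := by
    intro v
    obtain ⟨w, hw⟩ := hsurj v
    rw [← hw, Matrix.mulVec_mulVec, hX]
    simp [Matrix.zero_mulVec]
  ext i j
  have := congrFun (hzero (Pi.single j 1)) i
  simpa [Matrix.mulVec_single] using this

lemma count_full_lt {k : ℕ} (hk : k < n) :
    (univ.filter fun A : Matrix (Fin n) (Fin k) F => A.rank = n).card = 0 := by
  rw [Finset.card_eq_zero, Finset.filter_eq_empty_iff]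
  intro A _
  have := A.rank_le_card_width
  simp only [Fintype.card_fin] at this
  omega

lemma count_full_eq :
    (univ.filter fun A : Matrix (Fin n) (Fin n) F => A.rank = n).card
      = ∏ i ∈ range n, (Fintype.card F ^ n - Fintype.card F ^ i) := by
  have hiff : ∀ A : Matrix (Fin n) (Fin n) F, A.rank = n ↔ IsUnit A := by
    intro A
    constructor
    · intro h
      exact Matrix.mulVec_surjective_iff_isUnit.1 (range_top_of_rank_eq A h)
    · intro h
      rw [Matrix.rank_of_isUnit A h, Fintype.card_fin]
  have h1 : (univ.filter fun A : Matrix (Fin n) (Fin n) F => A.rank = n).card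
      = Fintype.card {A : Matrix (Fin n) (Fin n) F // IsUnit A} := by
    rw [Fintype.card_subtype]
    apply Finset.card_bij (fun A _ => A) <;> simp [hiff]
  rw [h1]
  have e : {A : Matrix (Fin n) (Fin n) F // IsUnit A} ≃ (Matrix (Fin n) (Fin n) F)ˣ :=
    { toFun := fun A => A.2.unit
      invFun := fun u => ⟨u, u.isUnit⟩
      left_inv := fun A => Subtype.ext rfl
      right_inv := fun u => Units.ext rfl }
  rw [Fintype.card_congr e]
  have hGL := Matrix.card_GL_field (𝔽 := F) (n := n)
  rw [Nat.card_eq_fintype_card] at hGL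
  rw [hGL]
  exact Fin.prod_univ_eq_prod_range (fun i => Fintype.card F ^ n - Fintype.card F ^ i) n

lemma key_sum (ψ : AddChar F ℂ) (hψ : ψ ≠ 1) (k : ℕ) :
    ∑ X : Matrix (Fin n) (Fin n) F,
        (starRingEnd ℂ) (ψ X.trace) * ((Fintype.card F : ℂ)) ^ ((n - X.rank) * k)
      = ((univ.filter fun A : Matrix (Fin n) (Fin k) F => A.rank = n).card : ℂ) := by
  have step1 : ∀ X : Matrix (Fin n) (Fin n) F,
      (starRingEnd ℂ) (ψ X.trace) * ((Fintype.card F : ℂ)) ^ ((n - X.rank) * k)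
      = ∑ A ∈ univ.filter fun A : Matrix (Fin n) (Fin k) F => X * A = 0,
          (starRingEnd ℂ) (ψ X.trace) := by
    intro X
    rw [Finset.sum_const, nsmul_eq_mul, mul_comm, ker_count X k]
    push_cast
    ring
  rw [Finset.sum_congr rfl fun X _ => step1 X]
  have swap : ∑ X : Matrix (Fin n) (Fin n) F,
      ∑ A ∈ univ.filter fun A : Matrix (Fin n) (Fin k) F => X * A = 0,
          (starRingEnd ℂ) (ψ X.trace)
      = ∑ A : Matrix (Fin n) (Fin k) F,
          ∑ X ∈ univ.filter fun X : Matrix (Fin n) (Fin n) F => X * A = 0,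
          (starRingEnd ℂ) (ψ X.trace) := by
    simp only [Finset.sum_filter]
    exact Finset.sum_comm
  rw [swap]
  have step2 : ∀ A : Matrix (Fin n) (Fin k) F,
      (∑ X ∈ univ.filter fun X : Matrix (Fin n) (Fin n) F => X * A = 0,
          (starRingEnd ℂ) (ψ X.trace))
      = if A.rank = n then 1 else 0 := by
    intro A
    by_cases hA : A.rank = n
    · rw [if_pos hA]
      have hfilter : (univ.filter fun X : Matrix (Fin n) (Fin n) F => X * A = 0) = {0} := by
        ext X
        simp only [Finset.mem_filter, Finset.mem_univ, true_and, Finset.mem_singleton]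
        constructor
        · exact fun h => annih_eq_zero A hA X h
        · rintro rfl; exact Matrix.zero_mul A
      rw [hfilter, Finset.sum_singleton]
      simp
    · rw [if_neg hA]
      have hlt : A.rank < n := by
        have := A.rank_le_card_height
        simp only [Fintype.card_fin] at this
        omega
      exact sum_annih_zero ψ hψ A hlt
  rw [Finset.sum_congr rfl fun A _ => step2 A]
  rw [Finset.sum_boole]

end Stmt13Aux

namespace Stmt13Aux

set_option linter.unusedSectionVars false

variable {F : Type} [Field F] [Fintype F] [DecidableEq F] {n : ℕ}

lemma card_facts : (2:ℕ) ≤ Fintype.card F := Fintype.one_lt_card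

lemma hQ_powers : ∀ i j : ℕ, i < j →
    ((Fintype.card F : ℂ)) ^ i ≠ ((Fintype.card F : ℂ)) ^ j := by
  intro i j hij h
  have h2 : (2:ℕ) ≤ Fintype.card F := Fintype.one_lt_card
  have hlt : Fintype.card F ^ i < Fintype.card F ^ j :=
    Nat.pow_lt_pow_right h2 hij
  have : ((Fintype.card F ^ i : ℕ) : ℂ) = ((Fintype.card F ^ j : ℕ) : ℂ) := by
    push_cast
    exact h
  rw [Nat.cast_inj] at this
  omega

lemma cast_count_full :
    (((univ.filter fun A : Matrix (Fin n) (Fin n) F => A.rank = n).card : ℕ) : ℂ)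
      = Nprod (Fintype.card F : ℂ) n n := by
  rw [count_full_eq, Nprod, Nat.cast_prod]
  apply Finset.prod_congr rfl
  intro i hi
  rw [Finset.mem_range] at hi
  have hle : Fintype.card F ^ i ≤ Fintype.card F ^ n :=
    Nat.pow_le_pow_right Fintype.card_pos (le_of_lt hi)
  push_cast [Nat.cast_sub hle]
  ring

lemma Wsum (ψ : AddChar F ℂ) (hψ : ψ ≠ 1) (s : ℕ) (hs : s ≤ n) :
    ∑ X : Matrix (Fin n) (Fin n) F,
        (starRingEnd ℂ) (ψ X.trace) * gbC (Fintype.card F : ℂ) (n - X.rank) s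
      = if s = n then 1 else 0 := by
  set Q : ℂ := (Fintype.card F : ℂ) with hQdef
  have hQ : ∀ i j : ℕ, i < j → Q ^ i ≠ Q ^ j := hQ_powers
  set P : Polynomial ℂ := ∏ i ∈ range s, (Polynomial.X - Polynomial.C (Q ^ i)) with hPdef
  have hstep : ∀ X : Matrix (Fin n) (Fin n) F,
      (starRingEnd ℂ) (ψ X.trace) * gbC Q (n - X.rank) s
      = (Nprod Q s s)⁻¹ * ∑ k ∈ range (s+1),
          P.coeff k * ((starRingEnd ℂ) (ψ X.trace) * Q ^ ((n - X.rank) * k)) := by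
    intro X
    have heval : P.eval (Q ^ (n - X.rank)) = Nprod Q (n - X.rank) s := by
      rw [hPdef, Pprod_eval, Nprod]
    have hexp : P.eval (Q ^ (n - X.rank))
        = ∑ k ∈ range (s+1), P.coeff k * (Q ^ (n - X.rank)) ^ k := by
      rw [Polynomial.eval_eq_sum_range' (n := s + 1)
        (by rw [hPdef, Pprod_natDegree]; omega) (Q ^ (n - X.rank))]
    rw [gbC, div_eq_mul_inv, ← heval, hexp, Finset.sum_mul, Finset.mul_sum, Finset.mul_sum]
    apply Finset.sum_congr rfl
    intro k _
    rw [← pow_mul]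
    ring
  rw [Finset.sum_congr rfl fun X _ => hstep X, ← Finset.mul_sum, Finset.sum_comm]
  have hinner : ∀ k, (∑ X : Matrix (Fin n) (Fin n) F,
      P.coeff k * ((starRingEnd ℂ) (ψ X.trace) * Q ^ ((n - X.rank) * k)))
      = P.coeff k *
        (((univ.filter fun A : Matrix (Fin n) (Fin k) F => A.rank = n).card : ℕ) : ℂ) := by
    intro k
    rw [← Finset.mul_sum, key_sum ψ hψ k]
  rw [Finset.sum_congr rfl fun k _ => hinner k]
  by_cases hsn : s = n
  · subst hsn
    rw [if_pos rfl]
    rw [Finset.sum_range_succ]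
    have hzero : ∀ k ∈ range s, P.coeff k *
        (((univ.filter fun A : Matrix (Fin s) (Fin k) F => A.rank = s).card : ℕ) : ℂ) = 0 := by
      intro k hk
      rw [Finset.mem_range] at hk
      rw [count_full_lt (by omega), Nat.cast_zero, mul_zero]
    rw [Finset.sum_congr rfl hzero, Finset.sum_const, smul_zero, zero_add]
    have hcoeff : P.coeff s = 1 := by
      have hmon := (Pprod_monic (Q := Q) s)
      have hdeg := (Pprod_natDegree (Q := Q) s)
      have h1 := hmon.coeff_natDegree
      rw [hdeg] at h1
      exact h1
    rw [hcoeff, one_mul, cast_count_full]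
    exact inv_mul_cancel₀ (Nprod_self_ne_zero hQ s)
  · rw [if_neg hsn]
    have hzero : ∀ k ∈ range (s+1), P.coeff k *
        (((univ.filter fun A : Matrix (Fin n) (Fin k) F => A.rank = n).card : ℕ) : ℂ) = 0 := by
      intro k hk
      rw [Finset.mem_range] at hk
      rw [count_full_lt (by omega), Nat.cast_zero, mul_zero]
    rw [Finset.sum_congr rfl hzero, Finset.sum_const, smul_zero, mul_zero]

end Stmt13Aux

/-- The q-Pochhammer symbol `(q;q)_t = ∏_{i=1}^{t} (1 - q^i)` in `ℂ`. -/
def qPochC (q : ℂ) (t : ℕ) : ℂ := ∏ i ∈ Finset.range t, (1 - q ^ (i + 1))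

/-- Prasad's summation (equation (3.28)): for a nontrivial additive character `ψ₀` of a
finite field `F` with `q` elements,
`∑_{X ∈ M_n(F)} \overline{ψ₀}(tr X)·(q;q)_{2n−1−rk X} = (−1)^n·q^{n²}·q^{n(n−1)/2}·(q;q)_{n−1}`. -/
theorem stmt_13 (F : Type) [Field F] [Fintype F]
    (q : ℕ) (hq : Fintype.card F = q) (n : ℕ) (hn : 1 ≤ n)
    (ψ : AddChar F ℂ) (hψ : ψ ≠ 1) :
    ∑ X : Matrix (Fin n) (Fin n) F,
        (starRingEnd ℂ) (ψ X.trace) * qPochC (q : ℂ) (2 * n - 1 - X.rank)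
      = (-1) ^ n * (q : ℂ) ^ (n ^ 2) * (q : ℂ) ^ (n * (n - 1) / 2) *
          qPochC (q : ℂ) (n - 1) := by
  letI := Classical.decEq F
  subst hq
  set Q : ℂ := (Fintype.card F : ℂ) with hQdef
  have hQ : ∀ i j : ℕ, i < j → Q ^ i ≠ Q ^ j := Stmt13Aux.hQ_powers
  have hQ0 : Q ≠ 0 := Nat.cast_ne_zero.2 Fintype.card_ne_zero
  have hrk : ∀ X : Matrix (Fin n) (Fin n) F, X.rank ≤ n := by
    intro X
    have := X.rank_le_card_width
    simpa using this
  have hstep : ∀ X : Matrix (Fin n) (Fin n) F,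
      (starRingEnd ℂ) (ψ X.trace) * qPochC Q (2 * n - 1 - X.rank)
      = ∑ s ∈ range (n+1),
          qPochC Q (n-1) * (Stmt13Aux.qcoef Q s * (Q ^ n) ^ s)
            * ((starRingEnd ℂ) (ψ X.trace) * Stmt13Aux.gbC Q (n - X.rank) s) := by
    intro X
    have h : 2 * n - 1 - X.rank = n - 1 + (n - X.rank) := by
      have := hrk X; omega
    rw [qPochC, h, Stmt13Aux.expand_qPoch hQ hQ0 n (n - X.rank) hn (by omega)]
    rw [Finset.mul_sum, Finset.mul_sum]
    apply Finset.sum_congr rfl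
    intro s _
    rw [qPochC]
    ring
  rw [Finset.sum_congr rfl fun X _ => hstep X, Finset.sum_comm]
  have hinner : ∀ s ∈ range (n+1), (∑ X : Matrix (Fin n) (Fin n) F,
      qPochC Q (n-1) * (Stmt13Aux.qcoef Q s * (Q ^ n) ^ s)
        * ((starRingEnd ℂ) (ψ X.trace) * Stmt13Aux.gbC Q (n - X.rank) s))
      = if s = n then qPochC Q (n-1) * (Stmt13Aux.qcoef Q s * (Q ^ n) ^ s) else 0 := by
    intro s hsr
    rw [Finset.mem_range] at hsr
    rw [← Finset.mul_sum, Stmt13Aux.Wsum ψ hψ s (by omega)]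
    by_cases h : s = n
    · rw [if_pos h, if_pos h, mul_one]
    · rw [if_neg h, if_neg h, mul_zero]
  rw [Finset.sum_congr rfl hinner, Finset.sum_ite_eq' (range (n+1)) n
    (fun s => qPochC Q (n-1) * (Stmt13Aux.qcoef Q s * (Q ^ n) ^ s)),
    if_pos (Finset.mem_range.2 (Nat.lt_succ_self n))]
  rw [Stmt13Aux.qcoef, ← pow_mul]
  have hnn : n * n = n ^ 2 := (sq n).symm
  rw [hnn]
  ring
end
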